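/- Let λ₁,…,λₙ > 0, α₁,…,αₙ > 0 with α := max αⱼ, and let β₁,…,βₙ > 0 with β := max βⱼ. Suppose α(1 + 2π β log 2) < 1. With γ = log(1/2) and g = sin, the function h(x) := Σⱼ λⱼ (x + αⱼ x sin(−2π βⱼ γ log x)) satisfies λ(1 − α(1 − 2πβγ))|x − y| ≤ |h(x) − h(y)| for all x, y > 0, where λ = Σⱼ λⱼ; in particular h is bi-Lipschitz on (0,∞). -/

import Mathlib

open Real

/-- `h = ∑ⱼ λⱼ g_{αⱼ, −2πβⱼ log(1/2)}` where `g_{α,β}(x) = x + α x sin(β log x)`. -/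
noncomputable def hfun (n : ℕ) (lam alpha beta : Fin n → ℝ) (x : ℝ) : ℝ :=
  ∑ j, lam j * (x + alpha j * x *
    Real.sin (-(2 * Real.pi * beta j * Real.log (1/2)) * Real.log x))

lemma term_hasDerivAt (c : ℝ) {x : ℝ} (hx : 0 < x) :
    HasDerivAt (fun x => x * Real.sin (c * Real.log x))
      (Real.sin (c * Real.log x) + c * Real.cos (c * Real.log x)) x := by
  have h1 : HasDerivAt Real.log x⁻¹ x := Real.hasDerivAt_log hx.ne'
  have h2 : HasDerivAt (fun x => c * Real.log x) (c * x⁻¹) x := h1.const_mul c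
  have h3 : HasDerivAt (fun x => Real.sin (c * Real.log x))
      (Real.cos (c * Real.log x) * (c * x⁻¹)) x := (Real.hasDerivAt_sin _).comp x h2
  have h4 := (hasDerivAt_id x).mul h3
  refine h4.congr_deriv ?_
  have hx0 : x * x⁻¹ = 1 := mul_inv_cancel₀ hx.ne'
  simp only [id_eq]
  linear_combination (c * Real.cos (c * Real.log x)) * hx0

theorem stmt1 (n : ℕ) (hn : 0 < n) (lam alpha beta : Fin n → ℝ)
    (hlam : ∀ j, 0 < lam j) (halpha : ∀ j, 0 < alpha j) (hbeta : ∀ j, 0 < beta j)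
    (α β : ℝ) (hαub : ∀ j, alpha j ≤ α) (hαmem : ∃ j, alpha j = α)
    (hβub : ∀ j, beta j ≤ β) (hβmem : ∃ j, beta j = β)
    (hsmall : α * (1 + 2 * π * β * Real.log 2) < 1) :
    (∀ x y : ℝ, 0 < x → 0 < y →
      (∑ j, lam j) * (1 - α * (1 - 2 * π * β * Real.log (1/2))) * |x - y| ≤
        |hfun n lam alpha beta x - hfun n lam alpha beta y|) ∧
    ∃ a b : ℝ, 0 < b ∧ b ≤ a ∧ ∀ x y : ℝ, 0 < x → 0 < y →
      b * |x - y| ≤ |hfun n lam alpha beta x - hfun n lam alpha beta y| ∧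
      |hfun n lam alpha beta x - hfun n lam alpha beta y| ≤ a * |x - y| := by
  haveI : Nonempty (Fin n) := ⟨⟨0, hn⟩⟩
  set L : ℝ := ∑ j, lam j with hL
  have hLpos : 0 < L := Finset.sum_pos (fun j _ => hlam j) Finset.univ_nonempty
  set c : Fin n → ℝ := fun j => -(2 * Real.pi * beta j * Real.log (1/2)) with hcdef
  have hαpos : 0 < α := lt_of_lt_of_le (halpha (Classical.arbitrary _)) (hαub _)
  have hβpos : 0 < β := lt_of_lt_of_le (hbeta (Classical.arbitrary _)) (hβub _)
  have hlog2 : (0:ℝ) < Real.log 2 := Real.log_pos (by norm_num)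
  have hc_eq : ∀ j, c j = 2 * Real.pi * beta j * Real.log 2 := by
    intro j
    have : Real.log (1/2 : ℝ) = -Real.log 2 := by
      rw [one_div, Real.log_inv]
    rw [hcdef]; simp only [this]; ring
  have hcpos : ∀ j, 0 < c j := by
    intro j
    rw [hc_eq j]
    have := hbeta j
    positivity
  set ℓ : ℝ → ℝ := fun x => ∑ j, (lam j * alpha j) * (x * Real.sin (c j * Real.log x)) with hℓ
  set K : ℝ := L * (α * (1 + 2 * π * β * Real.log 2)) with hK
  have hKpos : 0 < K := by
    apply mul_pos hLpos
    positivity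
  -- decomposition
  have hdecomp : ∀ x : ℝ, hfun n lam alpha beta x = L * x + ℓ x := by
    intro x
    simp only [hfun, hL, hℓ, Finset.sum_mul, ← Finset.sum_add_distrib]
    apply Finset.sum_congr rfl
    intro j _
    simp only [hcdef]
    ring
  -- lipschitz bound for ℓ
  have hlip : ∀ x y : ℝ, 0 < x → 0 < y → |ℓ x - ℓ y| ≤ K * |x - y| := by
    intro x y hx hy
    have := Convex.norm_image_sub_le_of_norm_hasDerivWithin_le
      (f := ℓ)
      (f' := fun x => ∑ j, (lam j * alpha j) *
        (Real.sin (c j * Real.log x) + c j * Real.cos (c j * Real.log x)))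
      (s := Set.Ioi (0:ℝ)) (C := K)
      (fun z hz => by
        apply HasDerivAt.hasDerivWithinAt
        apply HasDerivAt.fun_sum
        intro j _
        exact (term_hasDerivAt (c j) hz).const_mul _)
      (fun z hz => by
        calc ‖∑ j, (lam j * alpha j) *
            (Real.sin (c j * Real.log z) + c j * Real.cos (c j * Real.log z))‖
            ≤ ∑ j, ‖(lam j * alpha j) *
              (Real.sin (c j * Real.log z) + c j * Real.cos (c j * Real.log z))‖ :=
              norm_sum_le _ _
          _ ≤ ∑ j, lam j * (α * (1 + 2 * π * β * Real.log 2)) := by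
              apply Finset.sum_le_sum
              intro j _
              rw [Real.norm_eq_abs, abs_mul,
                abs_of_pos (mul_pos (hlam j) (halpha j))]
              have h1 : |Real.sin (c j * Real.log z) + c j * Real.cos (c j * Real.log z)|
                  ≤ 1 + c j := by
                calc |Real.sin (c j * Real.log z) + c j * Real.cos (c j * Real.log z)|
                    ≤ |Real.sin (c j * Real.log z)| + |c j * Real.cos (c j * Real.log z)| :=
                      abs_add_le _ _
                  _ ≤ 1 + c j := by
                    apply add_le_add (Real.abs_sin_le_one _)
                    rw [abs_mul, abs_of_pos (hcpos j)]
                    calc c j * |Real.cos (c j * Real.log z)| ≤ c j * 1 := by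
                          exact mul_le_mul_of_nonneg_left (Real.abs_cos_le_one _) (hcpos j).le
                      _ = c j := mul_one _
              calc lam j * alpha j * |Real.sin (c j * Real.log z) + c j * Real.cos (c j * Real.log z)|
                  ≤ lam j * alpha j * (1 + c j) := by
                    exact mul_le_mul_of_nonneg_left h1 (mul_pos (hlam j) (halpha j)).le
                _ ≤ lam j * (α * (1 + 2 * π * β * Real.log 2)) := by
                    rw [mul_assoc]
                    apply mul_le_mul_of_nonneg_left _ (hlam j).le
                    have hc1 : (0:ℝ) ≤ 1 + c j := by linarith [hcpos j]
                    apply mul_le_mul (hαub j) _ hc1 hαpos.le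
                    rw [hc_eq j]
                    have : 2 * Real.pi * beta j * Real.log 2 ≤ 2 * π * β * Real.log 2 := by
                      have hb := hβub j
                      have hbj := hbeta j
                      have hpi := Real.pi_pos
                      nlinarith [mul_le_mul_of_nonneg_right hb hlog2.le, mul_pos hpi hlog2]
                    linarith
          _ = K := by rw [hK, ← Finset.sum_mul])
      (convex_Ioi 0) (Set.mem_Ioi.mpr hy) (Set.mem_Ioi.mpr hx)
    simpa [Real.norm_eq_abs] using this
  have hconst : L * (1 - α * (1 - 2 * π * β * Real.log (1/2))) = L - K := by
    have : Real.log (1/2 : ℝ) = -Real.log 2 := by rw [one_div, Real.log_inv]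
    rw [this, hK]; ring
  have hKlt : K < L := by
    have : α * (1 + 2 * π * β * Real.log 2) < 1 := hsmall
    calc K = L * (α * (1 + 2 * π * β * Real.log 2)) := hK
      _ < L * 1 := by exact mul_lt_mul_of_pos_left this hLpos
      _ = L := mul_one _
  have main : ∀ x y : ℝ, 0 < x → 0 < y →
      (L - K) * |x - y| ≤ |hfun n lam alpha beta x - hfun n lam alpha beta y| ∧
      |hfun n lam alpha beta x - hfun n lam alpha beta y| ≤ (L + K) * |x - y| := by
    intro x y hx hy
    have hd : hfun n lam alpha beta x - hfun n lam alpha beta y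
        = L * (x - y) + (ℓ x - ℓ y) := by
      rw [hdecomp x, hdecomp y]; ring
    have hl := hlip x y hx hy
    constructor
    · have h1 : L * |x - y| ≤ |hfun n lam alpha beta x - hfun n lam alpha beta y| + K * |x - y| := by
        have : L * (x - y) = (hfun n lam alpha beta x - hfun n lam alpha beta y) - (ℓ x - ℓ y) := by
          rw [hd]; ring
        calc L * |x - y| = |L * (x - y)| := by
              rw [abs_mul, abs_of_pos hLpos]
          _ ≤ |hfun n lam alpha beta x - hfun n lam alpha beta y| + |ℓ x - ℓ y| := by
              rw [this]; exact abs_sub _ _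
          _ ≤ _ := by linarith
      nlinarith [abs_nonneg (x - y)]
    · calc |hfun n lam alpha beta x - hfun n lam alpha beta y|
          ≤ |L * (x - y)| + |ℓ x - ℓ y| := by rw [hd]; exact abs_add_le _ _
        _ ≤ L * |x - y| + K * |x - y| := by
            rw [abs_mul, abs_of_pos hLpos]; linarith
        _ = (L + K) * |x - y| := by ring
  constructor
  · intro x y hx hy
    rw [hconst]
    exact (main x y hx hy).1
  · exact ⟨L + K, L - K, by linarith, by linarith, fun x y hx hy => main x y hx hy⟩
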